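/- Let Γ be a nonempty set and A ⊆ ℓ^∞(Γ) a norm-closed sublattice of ℓ^∞(Γ) containing the constant functions. Then A is a subalgebra of ℓ^∞(Γ): for all f, g ∈ A the pointwise product f·g belongs to A. -/

import Mathlib

/-- Finite suprema of members of a max-closed submodule stay in it. -/
lemma stmt7_aux {Γ : Type*} (A : Submodule ℝ (Γ → ℝ))
    (hlat : ∀ f ∈ A, ∀ g ∈ A, (fun x => max (f x) (g x)) ∈ A)
    {ι : Type*} (s : Finset ι) (hs : s.Nonempty) (h : ι → Γ → ℝ)
    (hh : ∀ i ∈ s, h i ∈ A) :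
    (fun x => s.sup' hs (fun i => h i x)) ∈ A := by
  induction hs using Finset.Nonempty.cons_induction with
  | singleton i => simpa using hh i (by simp)
  | cons i s hi hs ih =>
      have h1 : h i ∈ A := hh i (by simp)
      have h2 : (fun x => s.sup' hs (fun j => h j x)) ∈ A :=
        ih fun j hj => hh j (by simp [hj])
      have := hlat _ h1 _ h2
      have heq : (fun x => (Finset.cons i s hi).sup' (Finset.cons_nonempty hi) fun j => h j x)
          = fun x => max (h i x) (s.sup' hs fun j => h j x) := by
        funext x
        rw [Finset.sup'_cons hs]
      rw [heq]
      exact this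

/-- Squares of members belong to `A`. -/
lemma stmt7_sq {Γ : Type*} [Nonempty Γ] (A : Submodule ℝ (Γ → ℝ))
    (hbdd : ∀ f ∈ A, ∃ C : ℝ, ∀ x, |f x| ≤ C)
    (hconst : ∀ c : ℝ, (fun _ : Γ => c) ∈ A)
    (hlat : ∀ f ∈ A, ∀ g ∈ A,
      (fun x => max (f x) (g x)) ∈ A ∧ (fun x => min (f x) (g x)) ∈ A)
    (hclosed : ∀ g : Γ → ℝ, (∀ ε > (0 : ℝ), ∃ f ∈ A, ∀ x, |f x - g x| ≤ ε) → g ∈ A)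
    (f : Γ → ℝ) (hf : f ∈ A) : (fun x => f x * f x) ∈ A := by
  obtain ⟨C, hC⟩ := hbdd f hf
  have hC0 : 0 ≤ C := le_trans (abs_nonneg _) (hC (Classical.arbitrary Γ))
  apply hclosed
  intro ε hε
  obtain ⟨n, hn⟩ := exists_nat_ge (4 * C ^ 2 / ε)
  -- ensure n ≥ 1
  set m : ℕ := n + 1 with hm
  have hm1 : (1 : ℝ) ≤ (m : ℝ) := by exact_mod_cast Nat.one_le_iff_ne_zero.2 (by simp [hm])
  have hmpos : (0 : ℝ) < (m : ℝ) := lt_of_lt_of_le one_pos hm1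
  have hkey : 4 * C ^ 2 ≤ ε * m ^ 2 := by
    have h1 : 4 * C ^ 2 / ε ≤ m := le_trans hn (by exact_mod_cast Nat.le_succ n)
    have h2 : 4 * C ^ 2 ≤ ε * m := by
      rw [div_le_iff₀ hε] at h1; linarith [h1]
    calc 4 * C ^ 2 ≤ ε * m := h2
      _ ≤ ε * m ^ 2 := by nlinarith [hε.le, hmpos.le, hm1]
  set a : ℕ → ℝ := fun i => -C + 2 * C * i / m with ha
  set hne : (Finset.range (m + 1)).Nonempty := ⟨0, by simp⟩
  refine ⟨fun x => (Finset.range (m + 1)).sup' hne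
      (fun i => 2 * a i * f x - (a i) ^ 2), ?_, ?_⟩
  · apply stmt7_aux A (fun f hf g hg => (hlat f hf g hg).1)
    intro i _
    have : ((2 * a i) • f + fun _ : Γ => -(a i) ^ 2) ∈ A :=
      A.add_mem (A.smul_mem _ hf) (hconst _)
    have heq : (fun x : Γ => 2 * a i * f x - (a i) ^ 2)
        = (2 * a i) • f + fun _ : Γ => -(a i) ^ 2 := by
      funext x
      simp only [Pi.add_apply, Pi.smul_apply, smul_eq_mul]
      ring
    rw [heq]
    exact this
  · intro x
    set t := f x with ht
    have htC : |t| ≤ C := hC x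
    have hub : (Finset.range (m + 1)).sup' hne (fun i => 2 * a i * t - (a i) ^ 2)
        ≤ t * t := by
      apply Finset.sup'_le
      intro i _
      nlinarith [sq_nonneg (t - a i)]
    have hlb : t * t - ε ≤
        (Finset.range (m + 1)).sup' hne (fun i => 2 * a i * t - (a i) ^ 2) := by
      -- find a nearby grid point
      obtain ⟨i, hi, hclose⟩ : ∃ i ∈ Finset.range (m + 1), (t - a i) ^ 2 ≤ 4 * C ^ 2 / m ^ 2 := by
        rcases eq_or_lt_of_le hC0 with hCeq | hCpos
        · refine ⟨0, by simp, ?_⟩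
          have ht0 : t = 0 := by
            have := htC; rw [← hCeq] at this
            simpa [abs_nonpos_iff] using this
          simp [ha, ht0, ← hCeq]
        · set u : ℝ := (t + C) * m / (2 * C) with hu
          have hu0 : 0 ≤ u := by
            apply div_nonneg _ (by linarith)
            have : -C ≤ t := neg_le_of_abs_le htC
            nlinarith
          have hun : u ≤ m := by
            rw [hu, div_le_iff₀ (by linarith)]
            have : t ≤ C := le_of_abs_le htC
            nlinarith
          refine ⟨⌊u⌋₊, ?_, ?_⟩
          · simp only [Finset.mem_range, Nat.lt_succ_iff]
            exact_mod_cast Nat.floor_le_of_le hun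
          · have h1 : (⌊u⌋₊ : ℝ) ≤ u := Nat.floor_le hu0
            have h2 : u < ⌊u⌋₊ + 1 := Nat.lt_floor_add_one u
            rw [hu] at h1 h2
            have hC2 : (0:ℝ) < 2 * C := by linarith
            have k1 : (⌊u⌋₊ : ℝ) * (2 * C) ≤ (t + C) * m :=
              (le_div_iff₀ hC2).1 h1
            have k2 : (t + C) * m < ((⌊u⌋₊ : ℝ) + 1) * (2 * C) :=
              (div_lt_iff₀ hC2).1 h2
            have ha1 : a ⌊u⌋₊ ≤ t := by
              show -C + 2 * C * (⌊u⌋₊ : ℝ) / m ≤ t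
              have h3 : 2 * C * (⌊u⌋₊ : ℝ) / m ≤ t + C := by
                rw [div_le_iff₀ hmpos]; nlinarith
              linarith
            have ha2 : t - a ⌊u⌋₊ ≤ 2 * C / m := by
              show t - (-C + 2 * C * (⌊u⌋₊ : ℝ) / m) ≤ 2 * C / m
              have h4 : t + C ≤ 2 * C * (⌊u⌋₊ : ℝ) / m + 2 * C / m := by
                rw [← add_div, le_div_iff₀ hmpos]; nlinarith
              linarith
            have hnn : 0 ≤ t - a ⌊u⌋₊ := by linarith
            calc (t - a ⌊u⌋₊) ^ 2 ≤ (2 * C / m) ^ 2 := pow_le_pow_left₀ hnn ha2 2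
              _ = 4 * C ^ 2 / m ^ 2 := by ring
      have hterm : t * t - ε ≤ 2 * a i * t - (a i) ^ 2 := by
        have hsmall : (t - a i) ^ 2 ≤ ε := by
          apply le_trans hclose
          rw [div_le_iff₀ (by positivity)]
          linarith [hkey]
        nlinarith
      exact le_trans hterm (Finset.le_sup' (fun i => 2 * a i * t - (a i) ^ 2) hi)
    rw [abs_le]
    constructor <;> [linarith; linarith]

/-- A norm-closed sublattice `A` of `ℓ^∞(Γ)` containing the constant functions is a
subalgebra: the pointwise product of any two members of `A` belongs to `A`. -/
theorem stmt7 {Γ : Type*} [Nonempty Γ] (A : Submodule ℝ (Γ → ℝ))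
    (hbdd : ∀ f ∈ A, ∃ C : ℝ, ∀ x, |f x| ≤ C)
    (hconst : ∀ c : ℝ, (fun _ : Γ => c) ∈ A)
    (hlat : ∀ f ∈ A, ∀ g ∈ A,
      (fun x => max (f x) (g x)) ∈ A ∧ (fun x => min (f x) (g x)) ∈ A)
    (hclosed : ∀ g : Γ → ℝ, (∀ ε > (0 : ℝ), ∃ f ∈ A, ∀ x, |f x - g x| ≤ ε) → g ∈ A) :
    ∀ f ∈ A, ∀ g ∈ A, (fun x => f x * g x) ∈ A := by
  intro f hf g hg
  have hsum := A.add_mem hf hg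
  have s1 := stmt7_sq A hbdd hconst hlat hclosed (f + g) hsum
  have s2 := stmt7_sq A hbdd hconst hlat hclosed f hf
  have s3 := stmt7_sq A hbdd hconst hlat hclosed g hg
  have : ((1/2 : ℝ)) • ((fun x => (f + g) x * (f + g) x) - (fun x => f x * f x)
      - fun x => g x * g x) ∈ A :=
    A.smul_mem _ (A.sub_mem (A.sub_mem s1 s2) s3)
  convert this using 1
  funext x
  simp [Pi.add_apply, smul_eq_mul]
  ring
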